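/- arXiv:1202.6469 — 2 statements merged into one kernel-verified Lean document; each statement's English description precedes it below -/
import Mathlib

section
/- Let S ⊆ ℝⁿ be a nonempty compact convex set and let Λ : ℝⁿ → ℝ be a convex continuous function. Then, with values in ℝ ∪ {+∞}, inf_{w ∈ S} sup_{τ ∈ ℝⁿ} (⟨τ, w⟩ − Λ(τ)) = sup_{τ ∈ ℝⁿ} inf_{w ∈ S} (⟨τ, w⟩ − Λ(τ)). -/
open Real

/-- Separation step: if no point of `S` satisfies all the finitely many constraints
`⟨τ,w⟩ - Λ τ ≤ m` for `τ ∈ F`, then some convex combination `τ'` of the `τ`'s beats `m`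
uniformly on `S`. -/
lemma aux_sep {n : ℕ} {S : Set (EuclideanSpace ℝ (Fin n))} (hS : S.Nonempty)
    (hScomp : IsCompact S) (hSconv : Convex ℝ S)
    {Λ : EuclideanSpace ℝ (Fin n) → ℝ} (hΛconv : ConvexOn ℝ Set.univ Λ)
    (m : ℝ) (F : Finset (EuclideanSpace ℝ (Fin n)))
    (hcon : ∀ w ∈ S, ∃ τ ∈ F, m < (inner ℝ τ w : ℝ) - Λ τ) :
    ∃ τ' : EuclideanSpace ℝ (Fin n), ∃ ε : ℝ, 0 < ε ∧
      ∀ w ∈ S, m + ε ≤ (inner ℝ τ' w : ℝ) - Λ τ' := by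
  classical
  let E := EuclideanSpace ℝ (Fin n)
  let ι := {x : E // x ∈ F}
  -- the linear evaluation map
  let L : E →ₗ[ℝ] (ι → ℝ) :=
    { toFun := fun w i => (inner ℝ (i : E) w : ℝ)
      map_add' := fun w₁ w₂ => by funext i; simp [inner_add_right]
      map_smul' := fun c w => by funext i; simp [real_inner_smul_right] }
  have hLcont : Continuous L := continuous_pi fun i =>
    Continuous.inner continuous_const continuous_id
  set A : Set (ι → ℝ) := Set.pi Set.univ (fun i : ι => Set.Iic (m + Λ (i : E))) with hA
  have hAconv : Convex ℝ A := convex_pi fun i _ => convex_Iic _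
  have hAclosed : IsClosed A := isClosed_set_pi fun i _ => isClosed_Iic
  set B : Set (ι → ℝ) := L '' S with hB
  have hBconv : Convex ℝ B := hSconv.linear_image L
  have hBcomp : IsCompact B := hScomp.image hLcont
  have disj : Disjoint A B := by
    rw [Set.disjoint_left]
    rintro x hxA ⟨w, hw, rfl⟩
    obtain ⟨τ, hτF, hτ⟩ := hcon w hw
    have := Set.mem_univ_pi.mp hxA (⟨τ, hτF⟩ : ι)
    simp only [Set.mem_Iic] at this
    change (inner ℝ τ w : ℝ) ≤ m + Λ τ at this
    linarith
  obtain ⟨f, u, v, hfA, huv, hfB⟩ :=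
    geometric_hahn_banach_closed_compact hAconv hAclosed hBconv hBcomp disj
  set lam : ι → ℝ := fun i => f ((Pi.single i 1 : ι → ℝ)) with hlamdef
  set y0 : ι → ℝ := fun i => m + Λ (i : E) with hy0def
  have hy0 : y0 ∈ A := fun i _ => Set.mem_Iic.mpr le_rfl
  have hfy0 : f y0 < u := hfA y0 hy0
  have hlam : ∀ i, 0 ≤ lam i := by
    intro i
    by_contra h
    push_neg at h
    set t : ℝ := (u - f y0) / (-lam i) with ht
    have htpos : 0 < t := div_pos (by linarith) (by linarith)
    have hmem : y0 - t • (Pi.single i 1 : ι → ℝ) ∈ A := by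
      intro j _
      simp only [Set.mem_Iic, Pi.sub_apply, Pi.smul_apply, smul_eq_mul]
      rcases eq_or_ne j i with rfl | hne
      · simp only [Pi.single_eq_same, mul_one, hy0def]
        nlinarith
      · simp [Pi.single_eq_of_ne hne, hy0def]
    have hval : f (y0 - t • (Pi.single i 1 : ι → ℝ)) = f y0 - t * lam i := by
      simp [map_sub, map_smul, smul_eq_mul, hlamdef]
    have hlt : f (y0 - t • (Pi.single i 1 : ι → ℝ)) < u := hfA _ hmem
    rw [hval, ht] at hlt
    have hne : lam i ≠ 0 := ne_of_lt h
    have hcalc : (u - f y0) / -lam i * lam i = f y0 - u := by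
      field_simp
      ring
    rw [hcalc] at hlt
    linarith
  have hrep : ∀ x : ι → ℝ, f x = ∑ i : ι, x i * lam i := by
    intro x
    have hx : x = ∑ i : ι, x i • (Pi.single i 1 : ι → ℝ) := by
      funext j
      simp only [Finset.sum_apply, Pi.smul_apply, smul_eq_mul]
      rw [Finset.sum_eq_single j]
      · simp
      · intro b _ hb; simp [Pi.single_eq_of_ne (Ne.symm hb)]
      · intro h; exact absurd (Finset.mem_univ j) h
    conv_lhs => rw [hx]
    rw [map_sum]
    simp [smul_eq_mul, hlamdef]
  obtain ⟨w₀, hw₀⟩ := hS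
  have hkey : ∀ w ∈ S, v - u < ∑ i : ι, lam i * ((inner ℝ (i : E) w : ℝ) - (m + Λ (i : E))) := by
    intro w hw
    have h2 : v < f (L w) := hfB _ ⟨w, hw, rfl⟩
    have e1 := hrep (L w)
    have e2 := hrep y0
    have hsum : (∑ i : ι, (L w) i * lam i) - ∑ i : ι, y0 i * lam i
        = ∑ i : ι, lam i * ((inner ℝ (i : E) w : ℝ) - (m + Λ (i : E))) := by
      rw [← Finset.sum_sub_distrib]
      refine Finset.sum_congr rfl fun i _ => ?_
      show (inner ℝ (i : E) w : ℝ) * lam i - (m + Λ (i : E)) * lam i = _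
      ring
    linarith
  set s : ℝ := ∑ i : ι, lam i with hsdef
  have hs0 : 0 ≤ s := Finset.sum_nonneg fun i _ => hlam i
  have hspos : 0 < s := by
    rcases lt_or_eq_of_le hs0 with h | h
    · exact h
    · exfalso
      have hall : ∀ i ∈ Finset.univ, lam i = 0 :=
        (Finset.sum_eq_zero_iff_of_nonneg (fun i _ => hlam i)).mp h.symm
      have := hkey w₀ hw₀
      rw [Finset.sum_congr rfl (fun i hi => by rw [hall i hi, zero_mul])] at this
      rw [Finset.sum_const_zero] at this
      linarith
  set τ' : E := ∑ i : ι, (lam i / s) • (i : E) with hτ'def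
  have hwsum : ∑ i : ι, lam i / s = 1 := by
    rw [← Finset.sum_div, ← hsdef, div_self hspos.ne']
  have hΛ' : Λ τ' ≤ ∑ i : ι, (lam i / s) * Λ (i : E) := by
    have := hΛconv.map_sum_le (t := Finset.univ) (w := fun i : ι => lam i / s)
      (p := fun i : ι => (i : E))
      (fun i _ => div_nonneg (hlam i) hs0) hwsum (fun i _ => Set.mem_univ _)
    simpa [smul_eq_mul] using this
  have hinner : ∀ w : E, (inner ℝ τ' w : ℝ) = ∑ i : ι, (lam i / s) * (inner ℝ (i : E) w : ℝ) := by
    intro w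
    rw [hτ'def, sum_inner]
    refine Finset.sum_congr rfl fun i _ => ?_
    rw [real_inner_smul_left]
  refine ⟨τ', (v - u) / s, div_pos (by linarith) hspos, ?_⟩
  intro w hw
  have hT := hkey w hw
  set T : ℝ := ∑ i : ι, lam i * ((inner ℝ (i : E) w : ℝ) - (m + Λ (i : E))) with hTdef
  have e2 : s * (∑ i : ι, (lam i / s) * ((inner ℝ (i : E) w : ℝ) - Λ (i : E))) = T + m * s := by
    have h1 : s * (∑ i : ι, (lam i / s) * ((inner ℝ (i : E) w : ℝ) - Λ (i : E)))
        = ∑ i : ι, lam i * ((inner ℝ (i : E) w : ℝ) - Λ (i : E)) := by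
      rw [Finset.mul_sum]
      refine Finset.sum_congr rfl fun i _ => ?_
      have hsne : s ≠ 0 := hspos.ne'
      field_simp
    have h2 : ∑ i : ι, lam i * ((inner ℝ (i : E) w : ℝ) - Λ (i : E)) = T + m * s := by
      rw [hTdef, hsdef, Finset.mul_sum, ← Finset.sum_add_distrib]
      refine Finset.sum_congr rfl fun i _ => ?_
      ring
    rw [h1, h2]
  have e3 : (inner ℝ τ' w : ℝ) - Λ τ' ≥ ∑ i : ι, (lam i / s) * ((inner ℝ (i : E) w : ℝ) - Λ (i : E)) := by
    rw [hinner w]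
    have : ∑ i : ι, (lam i / s) * ((inner ℝ (i : E) w : ℝ) - Λ (i : E))
        = (∑ i : ι, (lam i / s) * (inner ℝ (i : E) w : ℝ)) - ∑ i : ι, (lam i / s) * Λ (i : E) := by
      rw [← Finset.sum_sub_distrib]
      exact Finset.sum_congr rfl fun i _ => by ring
    rw [this]
    linarith [hΛ']
  -- combine: s * (inner ℝ τ' w - Λ τ') ≥ T + m*s > (v-u) + m*s
  have e4 : s * ((inner ℝ τ' w : ℝ) - Λ τ') > (v - u) + m * s := by
    nlinarith [e2, e3, hT, hspos]
  have h6 : s * (m + (v - u) / s) < s * ((inner ℝ τ' w : ℝ) - Λ τ') := by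
    have hms : s * ((v - u) / s) = v - u := by
      field_simp
    nlinarith [e4, hms]
  have := (mul_lt_mul_iff_right₀ hspos).mp h6
  linarith

/-- Sion-type minimax interchange for the convex conjugate: for `S` nonempty
compact convex and `Λ` convex continuous,
`inf_{w ∈ S} sup_τ (⟨τ,w⟩ − Λ τ) = sup_τ inf_{w ∈ S} (⟨τ,w⟩ − Λ τ)` in `EReal`. -/
theorem stmt4 {n : ℕ} (S : Set (EuclideanSpace ℝ (Fin n)))
    (hS : S.Nonempty) (hScomp : IsCompact S) (hSconv : Convex ℝ S)
    (Λ : EuclideanSpace ℝ (Fin n) → ℝ)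
    (hΛconv : ConvexOn ℝ Set.univ Λ) (hΛcont : Continuous Λ) :
    (⨅ w ∈ S, ⨆ τ : EuclideanSpace ℝ (Fin n), (((inner ℝ τ w : ℝ) - Λ τ : ℝ) : EReal))
      = ⨆ τ : EuclideanSpace ℝ (Fin n), ⨅ w ∈ S, (((inner ℝ τ w : ℝ) - Λ τ : ℝ) : EReal) := by
  classical
  refine le_antisymm ?hard ?easy
  case easy =>
    refine le_iInf fun w => le_iInf fun hw => ?_
    refine iSup_le fun τ => ?_
    exact le_trans (iInf₂_le w hw) (le_iSup (fun τ' : EuclideanSpace ℝ (Fin n) => (((inner ℝ τ' w : ℝ) - Λ τ' : ℝ) : EReal)) τ)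
  case hard =>
    -- hard direction
    set M : EReal := ⨆ τ : EuclideanSpace ℝ (Fin n),
      ⨅ w ∈ S, (((inner ℝ τ w : ℝ) - Λ τ : ℝ) : EReal) with hMdef
    by_cases htop : M = ⊤
    · rw [htop]; exact le_top
    have hbot : M ≠ ⊥ := by
      intro hb
      have h0 : (((- Λ 0 : ℝ)) : EReal) ≤ M := by
        rw [hMdef]
        refine le_trans ?_ (le_iSup _ (0 : EuclideanSpace ℝ (Fin n)))
        refine le_iInf fun w => le_iInf fun hw => ?_
        have : (inner ℝ (0 : EuclideanSpace ℝ (Fin n)) w : ℝ) = 0 := inner_zero_left w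
        rw [this]
        norm_num
      rw [hb] at h0
      exact absurd h0 (by simp)
    set m : ℝ := M.toReal with hmdef
    have hMm : M = (m : EReal) := (EReal.coe_toReal htop hbot).symm
    have hfip : ∀ F : Finset (EuclideanSpace ℝ (Fin n)),
        (S ∩ ⋂ τ ∈ F, {w | (inner ℝ τ w : ℝ) - Λ τ ≤ m}).Nonempty := by
      intro F
      by_contra hcon
      have hcon' : ∀ w ∈ S, ∃ τ ∈ F, m < (inner ℝ τ w : ℝ) - Λ τ := by
        intro w hw
        by_contra h
        push_neg at h
        exact hcon ⟨w, hw, Set.mem_iInter₂.mpr fun τ hτ => h τ hτ⟩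
      obtain ⟨τ', ε, hε, hτ'⟩ := aux_sep hS hScomp hSconv hΛconv m F hcon'
      have hle : ((m + ε : ℝ) : EReal) ≤ M := by
        rw [hMdef]
        refine le_trans ?_ (le_iSup _ τ')
        refine le_iInf fun w => le_iInf fun hw => ?_
        exact EReal.coe_le_coe_iff.mpr (hτ' w hw)
      rw [hMm] at hle
      have := EReal.coe_le_coe_iff.mp hle
      linarith
    obtain ⟨w₀, hw₀S, hw₀I⟩ := hScomp.inter_iInter_nonempty
      (fun τ : EuclideanSpace ℝ (Fin n) => {w | (inner ℝ τ w : ℝ) - Λ τ ≤ m})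
      (fun τ => isClosed_le ((Continuous.inner continuous_const continuous_id).sub
        continuous_const) continuous_const)
      hfip
    have hw₀ : ∀ τ : EuclideanSpace ℝ (Fin n), (inner ℝ τ w₀ : ℝ) - Λ τ ≤ m := by
      intro τ
      exact Set.mem_iInter.mp hw₀I τ
    refine le_trans (iInf₂_le w₀ hw₀S) ?_
    rw [hMm]
    exact iSup_le fun τ => EReal.coe_le_coe_iff.mpr (hw₀ τ)
end

section
/- Let Λ : ℝ → ℝ be twice differentiable with Λ'(0) = 1 and |Λ''(s)| ≤ K for all s ∈ ℝ (so that |Λ'(s) − 1| ≤ K|s| and Λ' is K-Lipschitz). Let n ≥ 1, let a₁,...,aₙ and b₁,...,bₙ be vectors in ℝᵏ and v ∈ ℝᵏ, and suppose (1/n) Σᵢ bᵢ Λ'(⟨v, bᵢ⟩) = 0. Then ‖(1/n) Σᵢ aᵢ Λ'(⟨v, aᵢ⟩)‖ ≤ K‖v‖ · (1/n) Σᵢ ‖aᵢ‖ ‖aᵢ − bᵢ‖ + (1/n) Σᵢ ‖aᵢ − bᵢ‖ + K‖v‖ · (1/n) Σᵢ ‖bᵢ‖ ‖aᵢ − bᵢ‖.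 -/
open Real

lemma lip13 (Λ : ℝ → ℝ) (K : ℝ)
    (hd2 : ∀ s, DifferentiableAt ℝ (deriv Λ) s)
    (hK : ∀ s, |deriv (deriv Λ) s| ≤ K) :
    ∀ x y : ℝ, |deriv Λ x - deriv Λ y| ≤ K * |x - y| := by
  intro x y
  have := (convex_univ (𝕜 := ℝ) (E := ℝ)).norm_image_sub_le_of_norm_deriv_le
    (f := deriv Λ) (C := K)
    (fun z _ => hd2 z)
    (fun z _ => by simpa using hK z)
    (Set.mem_univ y) (Set.mem_univ x)
  simpa [Real.norm_eq_abs] using this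

/-- Key estimate in the proof of the robustness theorem: if
`(1/n)∑ᵢ bᵢ Λ'(⟨v,bᵢ⟩) = 0`, then `‖(1/n)∑ᵢ aᵢ Λ'(⟨v,aᵢ⟩)‖` is bounded by
`K‖v‖·(1/n)∑‖aᵢ‖‖aᵢ−bᵢ‖ + (1/n)∑‖aᵢ−bᵢ‖ + K‖v‖·(1/n)∑‖bᵢ‖‖aᵢ−bᵢ‖`. -/
theorem stmt13 {n k : ℕ} (hn : 1 ≤ n) (Λ : ℝ → ℝ) (K : ℝ)
    (hd1 : ∀ s, DifferentiableAt ℝ Λ s)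
    (hd2 : ∀ s, DifferentiableAt ℝ (deriv Λ) s)
    (h1 : deriv Λ 0 = 1)
    (hK : ∀ s, |deriv (deriv Λ) s| ≤ K)
    (a b : Fin n → EuclideanSpace ℝ (Fin k)) (v : EuclideanSpace ℝ (Fin k))
    (hfoc : (1 / n : ℝ) • ∑ i, deriv Λ (inner ℝ v (b i) : ℝ) • b i = 0) :
    ‖(1 / n : ℝ) • ∑ i, deriv Λ (inner ℝ v (a i) : ℝ) • a i‖
      ≤ K * ‖v‖ * ((1 / n : ℝ) * ∑ i, ‖a i‖ * ‖a i - b i‖)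
        + (1 / n : ℝ) * ∑ i, ‖a i - b i‖
        + K * ‖v‖ * ((1 / n : ℝ) * ∑ i, ‖b i‖ * ‖a i - b i‖) := by
  have hlip := lip13 Λ K hd2 hK
  have hK0 : 0 ≤ K := le_trans (abs_nonneg _) (hK 0)
  have hn0 : (0:ℝ) ≤ 1 / n := by positivity
  -- per-term bound
  have hterm : ∀ i : Fin n,
      ‖deriv Λ (inner ℝ v (a i) : ℝ) • a i - deriv Λ (inner ℝ v (b i) : ℝ) • b i‖
        ≤ K * ‖v‖ * (‖a i‖ * ‖a i - b i‖) + ‖a i - b i‖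
          + K * ‖v‖ * (‖b i‖ * ‖a i - b i‖) := by
    intro i
    set α : ℝ := inner ℝ v (a i)
    set β : ℝ := inner ℝ v (b i)
    have hdecomp : deriv Λ α • a i - deriv Λ β • b i
        = deriv Λ α • (a i - b i) + (deriv Λ α - deriv Λ β) • b i := by
      module
    have hCS : |α| ≤ ‖v‖ * ‖a i‖ := abs_real_inner_le_norm v (a i)
    have hCS2 : |α - β| ≤ ‖v‖ * ‖a i - b i‖ := by
      have : α - β = inner ℝ v (a i - b i) := by
        simp [α, β, inner_sub_right]
      rw [this]; exact abs_real_inner_le_norm v (a i - b i)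
    have hA : |deriv Λ α| ≤ 1 + K * (‖v‖ * ‖a i‖) := by
      have h0 : |deriv Λ α - 1| ≤ K * |α| := by
        have := hlip α 0
        simpa [h1] using this
      calc |deriv Λ α| ≤ |deriv Λ α - 1| + 1 := by
            have := abs_sub_abs_le_abs_sub (deriv Λ α) 1
            simp at this ⊢; linarith [abs_sub_abs_le_abs_sub (deriv Λ α) (1:ℝ)]
        _ ≤ K * |α| + 1 := by linarith
        _ ≤ 1 + K * (‖v‖ * ‖a i‖) := by nlinarith [mul_le_mul_of_nonneg_left hCS hK0]
    have hB : |deriv Λ α - deriv Λ β| ≤ K * (‖v‖ * ‖a i - b i‖) := by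
      calc |deriv Λ α - deriv Λ β| ≤ K * |α - β| := hlip α β
        _ ≤ K * (‖v‖ * ‖a i - b i‖) := by
            exact mul_le_mul_of_nonneg_left hCS2 hK0
    calc ‖deriv Λ α • a i - deriv Λ β • b i‖
        ≤ ‖deriv Λ α • (a i - b i)‖ + ‖(deriv Λ α - deriv Λ β) • b i‖ := by
          rw [hdecomp]; exact norm_add_le _ _
      _ = |deriv Λ α| * ‖a i - b i‖ + |deriv Λ α - deriv Λ β| * ‖b i‖ := by
          simp [norm_smul, Real.norm_eq_abs]
      _ ≤ (1 + K * (‖v‖ * ‖a i‖)) * ‖a i - b i‖ + (K * (‖v‖ * ‖a i - b i‖)) * ‖b i‖ := by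
          gcongr
      _ = K * ‖v‖ * (‖a i‖ * ‖a i - b i‖) + ‖a i - b i‖ + K * ‖v‖ * (‖b i‖ * ‖a i - b i‖) := by
          ring
  have hS : ‖∑ i, deriv Λ (inner ℝ v (a i) : ℝ) • a i‖
      ≤ ∑ i, (K * ‖v‖ * (‖a i‖ * ‖a i - b i‖) + ‖a i - b i‖
          + K * ‖v‖ * (‖b i‖ * ‖a i - b i‖)) := by
    have hz : (∑ i, deriv Λ (inner ℝ v (b i) : ℝ) • b i : EuclideanSpace ℝ (Fin k)) = 0 := by
      have hne : (1 / n : ℝ) ≠ 0 := by positivity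
      exact (smul_eq_zero.mp hfoc).resolve_left hne
    calc ‖∑ i, deriv Λ (inner ℝ v (a i) : ℝ) • a i‖
        = ‖∑ i, (deriv Λ (inner ℝ v (a i) : ℝ) • a i - deriv Λ (inner ℝ v (b i) : ℝ) • b i)‖ := by
          rw [Finset.sum_sub_distrib, hz, sub_zero]
      _ ≤ ∑ i, ‖deriv Λ (inner ℝ v (a i) : ℝ) • a i - deriv Λ (inner ℝ v (b i) : ℝ) • b i‖ :=
          norm_sum_le _ _
      _ ≤ _ := Finset.sum_le_sum fun i _ => hterm i
  rw [norm_smul, Real.norm_eq_abs, abs_of_nonneg hn0]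
  calc (1 / n : ℝ) * ‖∑ i, deriv Λ (inner ℝ v (a i) : ℝ) • a i‖
      ≤ (1 / n : ℝ) * ∑ i, (K * ‖v‖ * (‖a i‖ * ‖a i - b i‖) + ‖a i - b i‖
          + K * ‖v‖ * (‖b i‖ * ‖a i - b i‖)) := by
        exact mul_le_mul_of_nonneg_left hS hn0
    _ = _ := by
        rw [Finset.sum_add_distrib, Finset.sum_add_distrib, ← Finset.mul_sum,
          ← Finset.mul_sum]
        ring
end
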